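/- Let P be an n×n complex unitary matrix with P · conj(P) = 1, let N be an n×n complex matrix with P · conj(N) · conj(P) = N, and let X, Y ∈ ℂ^n satisfy P · conj(X) = X and P · conj(Y) = Y. Then the scalar Xᴴ N Y (the standard Hermitian inner product of X with N·Y) is a real number, i.e. conj(Xᴴ N Y) = Xᴴ N Y. -/
import Mathlib


open Matrix

/-- Key computation in the proof of Theorem 1(a) of the paper: matrix elements of a
PT-symmetric matrix `N` between PT-fixed vectors are real. -/
theorem stmt_5 {n : ℕ} (P N : Matrix (Fin n) (Fin n) ℂ)
    (hU : P * Pᴴ = 1)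
    (hPT : P * P.map (starRingEnd ℂ) = 1)
    (hN : P * N.map (starRingEnd ℂ) * P.map (starRingEnd ℂ) = N)
    (X Y : Fin n → ℂ)
    (hX : P.mulVec (star X) = X) (hY : P.mulVec (star Y) = Y) :
    (starRingEnd ℂ) (star X ⬝ᵥ N.mulVec Y) = star X ⬝ᵥ N.mulVec Y := by
  set c := starRingEnd ℂ
  have hmapmap : ∀ M : Matrix (Fin n) (Fin n) ℂ, (M.map c).map c = M := by
    intro M; ext i j; simp [c, Matrix.map_apply]
  -- Pᴴ = P.map c
  have h1 : Pᴴ * P = 1 := mul_eq_one_comm.mp hU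
  have hH : Pᴴ = P.map c := by
    calc Pᴴ = Pᴴ * (P * P.map c) := by rw [hPT, mul_one]
    _ = (Pᴴ * P) * P.map c := by rw [mul_assoc]
    _ = P.map c := by rw [h1, one_mul]
  -- P is symmetric
  have hsym : Pᵀ = P := by
    have : Pᵀ.map c = P.map c := by rw [← hH]; rfl
    have := congrArg (fun M => M.map c) this
    simpa [hmapmap] using this
  -- conj(P) * P = 1
  have hPT' : P.map c * P = 1 := by
    have := congrArg (fun M => Matrix.map M c) hPT
    simpa [Matrix.map_mul, hmapmap] using this
  -- conj of hN : P.map c * N * P = N.map c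
  have hN' : P.map c * N * P = N.map c := by
    have := congrArg (fun M => Matrix.map M c) hN
    simpa [Matrix.map_mul, hmapmap] using this
  -- star Y = (P.map c).mulVec Y
  have hsY : star Y = (P.map c).mulVec Y := by
    have := congrArg (fun v => (P.map c).mulVec v) hY
    simpa [Matrix.mulVec_mulVec, hPT'] using this
  have hsX : star X = (P.map c).mulVec X := by
    have := congrArg (fun v => (P.map c).mulVec v) hX
    simpa [Matrix.mulVec_mulVec, hPT'] using this
  -- conj of the dot product
  have key : c (star X ⬝ᵥ N.mulVec Y) = X ⬝ᵥ (N.map c).mulVec (star Y) := by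
    simp [c, dotProduct, mulVec, map_sum, Matrix.map_apply, mul_comm, mul_left_comm,
      Finset.mul_sum]
  have h2 : N.map c * P.map c = P.map c * N := by
    rw [← hN', Matrix.mul_assoc, Matrix.mul_assoc, hPT, mul_one]
  rw [key, hsY, Matrix.mulVec_mulVec, h2, ← Matrix.mulVec_mulVec]
  rw [Matrix.dotProduct_mulVec X (P.map c)]
  have : Matrix.vecMul X (P.map c) = star X := by
    rw [hsX]
    ext k
    simp [Matrix.vecMul, Matrix.mulVec, dotProduct]
    apply Finset.sum_congr rfl
    intro j _
    rw [mul_comm]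
    congr 1
    conv_lhs => rw [← hsym]
    rfl
  rw [this]
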